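/- arXiv:1607.07658 — 2 statements merged into one kernel-verified Lean document; each statement's English description precedes it below -/
import Mathlib

section
/- For every w = (x_1,...,x_k) ∈ X^{(k)} and every l ∈ {1,...,k}, there exist real numbers A > 0 and B such that for every x ∈ X_l, T(w') = A · F_{l,σ^l(w)}(x) + B, where w' denotes the word obtained from w by replacing its l-th letter by x. -/
open Finset

namespace Secretary

/-- Binomial coefficient on integers: zero when `b < 0` or `b > a`. -/
noncomputable def Cb (a b : ℤ) : ℝ :=
  if 0 ≤ b ∧ b ≤ a then (Nat.choose a.toNat b.toNat : ℝ) else 0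

/-- The value `π(i)` of a permutation of `{1,...,n}` in 1-based indexing. -/
def pv (n : ℕ) (π : Equiv.Perm (Fin n)) (i : ℕ) : ℕ :=
  if h : i - 1 < n then ((π ⟨i - 1, h⟩ : Fin n) : ℕ) + 1 else 0

/-- The relative rank `ρ_π(i)`: the number of `j ∈ {1,...,i}` with `π(j) ≤ π(i)`. -/
def rho (n : ℕ) (π : Equiv.Perm (Fin n)) (i : ℕ) : ℕ :=
  ((Finset.Icc 1 i).filter fun j => pv n π j ≤ pv n π i).card

/-- Extension of a sequence `s` with `s (k+1) = n - 1`. -/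
def sExt (n k : ℕ) (s : ℕ → ℕ) (l : ℕ) : ℕ := if l = k + 1 then n - 1 else s l

/-- `i` is a `(π, l, w)`-element. -/
def IsElem (n k : ℕ) (s : ℕ → ℕ) (π : Equiv.Perm (Fin n)) (l i : ℕ) : Prop :=
  sExt n k s l < i ∧ i ≤ sExt n k s (l + 1) ∧ rho n π i ≤ l

/-- `l` is a `w`-threshold of `π`. -/
def IsThreshold (n k : ℕ) (s : ℕ → ℕ) (π : Equiv.Perm (Fin n)) (l : ℕ) : Prop :=
  1 ≤ l ∧ l ≤ k ∧ ∃ i, IsElem n k s π l i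

open Classical in
/-- `π` is a lucky permutation for the sequence `w = s`. -/
def Lucky (n k : ℕ) (s : ℕ → ℕ) (π : Equiv.Perm (Fin n)) : Prop :=
  if ∃ l, IsThreshold n k s π l then
    pv n π (sInf {i | IsElem n k s π (sInf {l | IsThreshold n k s π l}) i}) ≤ k
  else pv n π n ≤ k

/-- The maps `r_l` (first argument an integer `l ≤ k`). -/
noncomputable def rr (n k : ℕ) (l : ℤ) (x : ℕ) : ℝ :=
  if l < 0 then 0
  else if l = 0 then
    1 / (x : ℝ) - (k : ℝ) / n - Cb ((n : ℤ) - x - 1) k / ((x : ℝ) * Cb n k)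
      - (1 / Cb n k) * ∑ j ∈ Finset.Icc 1 x, Cb ((n : ℤ) - j - 1) ((k : ℤ) - 1) / (j : ℝ)
  else
    ((Nat.factorial (x - l.toNat - 1) : ℝ) / (Nat.factorial x : ℝ)) *
      (1 - (1 / ((l : ℝ) * Cb n x)) *
        ∑ j ∈ Finset.range (l.toNat + 1),
          ((l : ℝ) - j) * Cb k j * Cb ((n : ℤ) - k) ((x : ℤ) - j))

/-- The constant `δ_{k,n}`. -/
noncomputable def delta (n k : ℕ) : ℝ :=
  if k = 1 then -(1 / (n : ℝ)) * ∑ j ∈ Finset.Icc 1 (n - 1), (1 : ℝ) / j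
  else (Nat.factorial (n - k) : ℝ) / (Nat.factorial n : ℝ)

/-- The maps `d_l` for `0 ≤ l ≤ k`. -/
noncomputable def d (n k : ℕ) (l x : ℕ) : ℝ :=
  if l = 0 then
    -1 + (k : ℝ) * x / n + Cb ((n : ℤ) - x - 1) k / Cb n k
      + ((x : ℝ) / Cb n k) * ∑ j ∈ Finset.Icc 1 x, Cb ((n : ℤ) - j - 1) ((k : ℤ) - 1) / (j : ℝ)
  else if l = 1 then
    -((k : ℝ) / n) - (1 / Cb n k) * ∑ j ∈ Finset.Icc 1 x, Cb ((n : ℤ) - j - 1) ((k : ℤ) - 1) / (j : ℝ)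
  else
    ((k : ℝ) * (Nat.factorial x : ℝ) * (Nat.factorial (n - l - x) : ℝ) /
        ((l : ℝ) * ((l : ℝ) - 1) * (Nat.factorial n : ℝ))) *
      ∑ j ∈ Finset.range (l - 1), Cb ((k : ℤ) - 1) j * Cb ((n : ℤ) - k) ((x : ℤ) + l - j - 1)

/-- The maps `c_l(x) = d_l(x - l)`. -/
noncomputable def c (n k l x : ℕ) : ℝ := d n k l (x - l)

/-- The constant `ξ_{k,n}`. -/
noncomputable def xi (n k : ℕ) : ℝ :=
  (k : ℝ) * (Nat.factorial (n - k - 1) : ℝ) / (Nat.factorial n : ℝ)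

/-- `w` (given as a 1-indexed function) is a word in `X^{(k-l)}`, i.e. its `j`-th letter
belongs to `X_{l+j} = {l+j, ..., n-1}` for `1 ≤ j ≤ k - l`. -/
def memX (n k l : ℕ) (w : ℕ → ℕ) : Prop :=
  ∀ j ∈ Finset.Icc 1 (k - l), l + j ≤ w j ∧ w j ≤ n - 1

/-- The left-shift operator removing the first `l` letters of a word. -/
def shift (l : ℕ) (w : ℕ → ℕ) : ℕ → ℕ := fun j => w (l + j)

/-- The maps `R_{l,j}`. -/
noncomputable def Rmap (n k l : ℕ) (w : ℕ → ℕ) (j : ℕ) : ℝ :=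
  if 1 ≤ j ∧ j ≤ k - l then
    rr n k ((l : ℤ) + j - 1) (w j)
      - rr n k ((l : ℤ) + j - 1) (if j = k - l then n - 1 else w (j + 1))
  else 0

/-- The maps `Γ_{l,j,j'}`. -/
noncomputable def Gam (n k l j j' : ℕ) (w : ℕ → ℕ) : ℝ :=
  if 1 ≤ j ∧ j ≤ j' ∧ j' ≤ k - l then
    ∏ t ∈ Finset.Icc j j', ((w t : ℝ) - l - t + 1)
  else 1

/-- The maps `T_l`. -/
noncomputable def Tmap (n k l : ℕ) (w : ℕ → ℕ) : ℝ :=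
  (∑ j ∈ Finset.Icc 1 (k - l), Rmap n k l w j * Gam n k l 1 j w)
    + xi n k * Gam n k l 1 (k - l) w

/-- The maps `D_l(w) = r_{l-1}(x_1) - T_l(w)`, with `x_1 := n-1` when `l = k`. -/
noncomputable def Dmap (n k l : ℕ) (w : ℕ → ℕ) : ℝ :=
  rr n k ((l : ℤ) - 1) (if l = k then n - 1 else w 1) - Tmap n k l w

/-- The maps `F_{l,w}(x) = -c_{l-1}(x) - x·D_l(w)`. -/
noncomputable def Fmap (n k l : ℕ) (w : ℕ → ℕ) (x : ℕ) : ℝ :=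
  -(c n k (l - 1) x) - (x : ℝ) * Dmap n k l w

/-- The maps `a_l`. -/
noncomputable def amap (n k l x : ℕ) : ℝ :=
  (1 / Cb n x) * ∑ j ∈ Finset.range (l + 1), Cb k j * Cb ((n : ℤ) - k) ((x : ℤ) - j)

/-- The maps `b_l`. -/
noncomputable def bmap (n k l x : ℕ) : ℝ :=
  (1 / ((l : ℝ) * Cb n x)) *
    ∑ j ∈ Finset.range (l + 1), (j : ℝ) * Cb k j * Cb ((n : ℤ) - k) ((x : ℤ) - j)

/-- `π ∈ S(l0, i0)`: `π` is lucky for `s`, `l0` is the smallest `s`-threshold of `π`,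
and `i0` is the smallest `(π, l0, s)`-element. -/
def SMem (n k : ℕ) (s : ℕ → ℕ) (l0 i0 : ℕ) (π : Equiv.Perm (Fin n)) : Prop :=
  Lucky n k s π ∧ IsLeast {l | IsThreshold n k s π l} l0 ∧
    IsLeast {i | IsElem n k s π l0 i} i0

/-- `π ∈ S(Y, Y', l0, i0)`. -/
def SYYMem (n k : ℕ) (s : ℕ → ℕ) (Y Y' : Finset ℕ) (l0 i0 : ℕ) (π : Equiv.Perm (Fin n)) :
    Prop :=
  SMem n k s l0 i0 π ∧ ((Finset.Icc 1 i0).image (pv n π)) ∩ Finset.Icc 1 k = Y ∧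
    ((Finset.Icc 1 i0).image (pv n π)) ∩ Finset.Icc (k + 1) n = Y'

lemma Cb_natCast (a b : ℕ) : Cb (a:ℤ) (b:ℤ) = (a.choose b : ℝ) := by
  unfold Cb
  split_ifs with h
  · simp
  · push_neg at h
    have : a < b := by exact_mod_cast h (by positivity)
    simp [Nat.choose_eq_zero_of_lt this]

lemma choose_mul_choose_symm (n x k : ℕ) (hx : x ≤ n) (hk : k ≤ n) :
    (n.choose x : ℝ) * (n - x).choose k = (n.choose k : ℝ) * (n - k).choose x := by
  rcases le_or_gt (x + k) n with h | h
  · have h1 : k ≤ n - x := by omega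
    have h2 : x ≤ n - k := by omega
    have e1 := Nat.choose_mul_factorial_mul_factorial hx
    have e2 := Nat.choose_mul_factorial_mul_factorial h1
    have e3 := Nat.choose_mul_factorial_mul_factorial hk
    have e4 := Nat.choose_mul_factorial_mul_factorial h2
    have hnxk : n - x - k = n - k - x := by omega
    have hfpos : (0:ℝ) < (x.factorial : ℝ) * k.factorial * (n - x - k).factorial := by
      positivity
    have key : ((n.choose x : ℝ) * (n - x).choose k) * ((x.factorial : ℝ) * k.factorial * (n - x - k).factorial)
        = ((n.choose k : ℝ) * (n - k).choose x) * ((x.factorial : ℝ) * k.factorial * (n - x - k).factorial) := by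
      have l1 : ((n.choose x : ℝ) * x.factorial * (n-x).factorial) = n.factorial := by exact_mod_cast congrArg (Nat.cast (R := ℝ)) e1
      have l2 : (((n-x).choose k : ℝ) * k.factorial * (n-x-k).factorial) = (n-x).factorial := by exact_mod_cast congrArg (Nat.cast (R := ℝ)) e2
      have l3 : ((n.choose k : ℝ) * k.factorial * (n-k).factorial) = n.factorial := by exact_mod_cast congrArg (Nat.cast (R := ℝ)) e3
      have l4 : (((n-k).choose x : ℝ) * x.factorial * (n-k-x).factorial) = (n-k).factorial := by exact_mod_cast congrArg (Nat.cast (R := ℝ)) e4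
      rw [hnxk]
      calc ((n.choose x : ℝ) * (n - x).choose k) * ((x.factorial : ℝ) * k.factorial * (n - k - x).factorial)
          = ((n.choose x : ℝ) * x.factorial) * (((n-x).choose k : ℝ) * k.factorial * (n-x-k).factorial) := by rw [hnxk]; ring
        _ = ((n.choose x : ℝ) * x.factorial) * (n-x).factorial := by rw [l2]
        _ = (n.factorial : ℝ) := by rw [← l1]
        _ = ((n.choose k : ℝ) * k.factorial) * (n-k).factorial := by rw [← l3]
        _ = ((n.choose k : ℝ) * k.factorial) * (((n-k).choose x : ℝ) * x.factorial * (n-k-x).factorial) := by rw [l4]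
        _ = _ := by ring
    exact mul_right_cancel₀ (ne_of_gt hfpos) key
  · have h1 : n - x < k := by omega
    have h2 : n - k < x := by omega
    simp [Nat.choose_eq_zero_of_lt h1, Nat.choose_eq_zero_of_lt h2]


lemma Tmap_congr (n k l : ℕ) (w₁ w₂ : ℕ → ℕ)
    (h : ∀ j, 1 ≤ j → j ≤ k - l → w₁ j = w₂ j) : Tmap n k l w₁ = Tmap n k l w₂ := by
  have hG : ∀ j, Gam n k l 1 j w₁ = Gam n k l 1 j w₂ := by
    intro j
    unfold Gam
    split_ifs with hc
    · exact Finset.prod_congr rfl fun t ht => by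
        rw [Finset.mem_Icc] at ht; rw [h t ht.1 (le_trans ht.2 hc.2.2)]
    · rfl
  unfold Tmap
  rw [hG (k - l)]
  congr 1
  refine Finset.sum_congr rfl fun j hj => ?_
  rw [Finset.mem_Icc] at hj
  rw [hG j]
  congr 1
  have hwj1 : (if j = k - l then n-1 else w₁ (j+1)) = (if j = k - l then n-1 else w₂ (j+1)) := by
    split_ifs with h2
    · rfl
    · exact h (j+1) (by omega) (by omega)
  unfold Rmap
  rw [h j hj.1 hj.2, hwj1]
lemma Icc_one_eq_Ioc (m : ℕ) : Finset.Icc 1 m = Finset.Ioc 0 m := Finset.Icc_add_one_left_eq_Ioc 0 m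

lemma reindex_sum (l a : ℕ) (h : l ≤ a) (f : ℕ → ℝ) :
    ∑ j ∈ Finset.Ioc l a, f j = ∑ j ∈ Finset.Ioc 0 (a - l), f (l + j) := by
  obtain ⟨m, rfl⟩ : ∃ m, a = l + m := ⟨a - l, by omega⟩
  rw [show l + m - l = m by omega,
    show Finset.Ioc l (l+m) = (Finset.Ioc 0 m).map (addLeftEmbedding l) by
      rw [Finset.map_add_left_Ioc]; norm_num,
    Finset.sum_map]
  simp [addLeftEmbedding]

lemma reindex_prod (l a : ℕ) (h : l ≤ a) (f : ℕ → ℝ) :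
    ∏ j ∈ Finset.Ioc l a, f j = ∏ j ∈ Finset.Ioc 0 (a - l), f (l + j) := by
  obtain ⟨m, rfl⟩ : ∃ m, a = l + m := ⟨a - l, by omega⟩
  rw [show l + m - l = m by omega,
    show Finset.Ioc l (l+m) = (Finset.Ioc 0 m).map (addLeftEmbedding l) by
      rw [Finset.map_add_left_Ioc]; norm_num,
    Finset.prod_map]
  simp [addLeftEmbedding]

lemma Gam_split (n k l : ℕ) (hl1 : 1 ≤ l) (hlk : l ≤ k) (w' : ℕ → ℕ) (j : ℕ)
    (hj1 : l ≤ j) (hj2 : j ≤ k) :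
    Gam n k 0 1 j w' =
      (∏ t ∈ Finset.Icc 1 l, ((w' t : ℝ) - t + 1)) * Gam n k l 1 (j - l) (shift l w') := by
  have hL : Gam n k 0 1 j w' = ∏ t ∈ Finset.Icc 1 j, ((w' t : ℝ) - t + 1) := by
    unfold Gam
    rw [if_pos (show (1:ℕ) ≤ 1 ∧ 1 ≤ j ∧ j ≤ k - 0 from ⟨le_refl 1, by omega, by omega⟩)]
    exact Finset.prod_congr rfl fun t _ => by push_cast; ring
  rcases eq_or_lt_of_le hj1 with h | h
  · rw [hL, show j - l = 0 by omega]
    have h1 : Gam n k l 1 0 (shift l w') = 1 := by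
      unfold Gam; rw [if_neg (by omega)]
    rw [h1, mul_one, ← h]
  · have hR : Gam n k l 1 (j - l) (shift l w') =
        ∏ t ∈ Finset.Icc 1 (j - l), ((shift l w' t : ℝ) - l - t + 1) := by
      unfold Gam
      rw [if_pos (show (1:ℕ) ≤ 1 ∧ 1 ≤ j - l ∧ j - l ≤ k - l from ⟨le_refl 1, by omega, by omega⟩)]
    have e1 : ∏ t ∈ Finset.Icc 1 j, ((w' t : ℝ) - t + 1)
        = (∏ t ∈ Finset.Icc 1 l, ((w' t : ℝ) - t + 1)) *
          ∏ t ∈ Finset.Ioc l j, ((w' t : ℝ) - t + 1) := by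
      rw [Icc_one_eq_Ioc (m := j), Icc_one_eq_Ioc (m := l),
        Finset.prod_Ioc_consecutive _ (Nat.zero_le l) (le_of_lt h)]
    have e2 : ∏ t ∈ Finset.Ioc l j, ((w' t : ℝ) - t + 1)
        = ∏ t ∈ Finset.Icc 1 (j - l), ((shift l w' t : ℝ) - (l:ℝ) - t + 1) := by
      rw [reindex_prod l j (le_of_lt h), Icc_one_eq_Ioc]
      refine Finset.prod_congr rfl fun t _ => ?_
      show ((w' (l + t) : ℝ) - ((l + t : ℕ):ℝ) + 1) = ((shift l w' t : ℝ) - (l:ℝ) - t + 1)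
      show ((w' (l + t) : ℝ) - ((l + t : ℕ):ℝ) + 1) = ((w' (l + t) : ℝ) - (l:ℝ) - t + 1)
      push_cast; ring
    rw [hL, hR, e1, e2]

lemma Tmap_zero_split (n k l : ℕ) (hl1 : 1 ≤ l) (hlk : l ≤ k) (w' : ℕ → ℕ) :
    Tmap n k 0 w' = (∑ j ∈ Finset.Ioc 0 (l-1), Rmap n k 0 w' j * Gam n k 0 1 j w')
      + (∏ t ∈ Finset.Icc 1 l, ((w' t : ℝ) - t + 1)) *
        ((rr n k ((l:ℤ)-1) (w' l) - rr n k ((l:ℤ)-1) (if l = k then n-1 else w' (l+1)))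
          + Tmap n k l (shift l w')) := by
  set Q := ∏ t ∈ Finset.Icc 1 l, ((w' t : ℝ) - t + 1) with hQdef
  have hsing : Finset.Ioc (l-1) l = {l} := by
    have h := Nat.Ioc_succ_singleton (b := l-1)
    rw [show l-1+1 = l by omega] at h
    exact h
  have hsum : ∑ j ∈ Finset.Icc 1 (k - 0), Rmap n k 0 w' j * Gam n k 0 1 j w' =
      (∑ j ∈ Finset.Ioc 0 (l-1), Rmap n k 0 w' j * Gam n k 0 1 j w')
      + Rmap n k 0 w' l * Gam n k 0 1 l w'
      + ∑ j ∈ Finset.Ioc l k, Rmap n k 0 w' j * Gam n k 0 1 j w' := by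
    rw [Nat.sub_zero, Icc_one_eq_Ioc,
      ← Finset.sum_Ioc_consecutive _ (Nat.zero_le l) hlk,
      ← Finset.sum_Ioc_consecutive _ (by omega : (0:ℕ) ≤ l-1) (by omega : l-1 ≤ l),
      hsing, Finset.sum_singleton]
  have hR : Rmap n k 0 w' l =
      rr n k ((l:ℤ)-1) (w' l) - rr n k ((l:ℤ)-1) (if l = k then n-1 else w' (l+1)) := by
    have hc1 : (1:ℕ) ≤ l ∧ l ≤ k - 0 := ⟨hl1, by omega⟩
    unfold Rmap
    rw [if_pos hc1]
    have harg : (((0:ℕ)):ℤ) + (l:ℤ) - 1 = ((l:ℤ) - 1) := by push_cast; ring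
    have hif : (if l = k - 0 then n - 1 else w' (l + 1)) =
        (if l = k then n - 1 else w' (l + 1)) := by rw [Nat.sub_zero]
    rw [harg, hif]
  have hQl : Gam n k 0 1 l w' = Q := by
    unfold Gam
    rw [if_pos (show (1:ℕ) ≤ 1 ∧ 1 ≤ l ∧ l ≤ k - 0 from ⟨le_refl 1, by omega, by omega⟩), hQdef]
    exact Finset.prod_congr rfl fun t _ => by push_cast; ring
  have hrw : ∀ j ∈ Finset.Ioc 0 (k - l),
      Rmap n k 0 w' (l + j) * Gam n k 0 1 (l + j) w' =
      Q * (Rmap n k l (shift l w') j * Gam n k l 1 j (shift l w')) := by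
    intro j hj
    rw [Finset.mem_Ioc] at hj
    have hc1 : (1:ℕ) ≤ l + j ∧ l + j ≤ k - 0 := ⟨by omega, by omega⟩
    have hc2 : (1:ℕ) ≤ j ∧ j ≤ k - l := ⟨by omega, hj.2⟩
    have hRj : Rmap n k 0 w' (l + j) = Rmap n k l (shift l w') j := by
      have harg : (((0:ℕ):ℤ) + (l+j) - 1) = ((l:ℤ) + j - 1) := by push_cast; ring
      have hif : (if l + j = k - 0 then n - 1 else w' (l + j + 1)) =
          (if j = k - l then n - 1 else shift l w' (j + 1)) := by
        by_cases hc : j = k - l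
        · rw [if_pos hc, if_pos (by omega)]
        · rw [if_neg (by omega), if_neg hc]
          rfl
      unfold Rmap
      rw [if_pos hc1, if_pos hc2, hif]
      simp only [Nat.cast_add, Nat.cast_zero, zero_add]
      rfl
    have hGj : Gam n k 0 1 (l + j) w' = Q * Gam n k l 1 j (shift l w') := by
      have hG := Gam_split n k l hl1 hlk w' (l + j) (by omega) (by omega)
      rwa [show l + j - l = j by omega] at hG
    rw [hRj, hGj]; ring
  have hrest : ∑ j ∈ Finset.Ioc l k, Rmap n k 0 w' j * Gam n k 0 1 j w' =
      Q * ∑ j ∈ Finset.Ioc 0 (k-l), Rmap n k l (shift l w') j * Gam n k l 1 j (shift l w') := by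
    rw [reindex_sum l k hlk, Finset.mul_sum]
    exact Finset.sum_congr rfl hrw
  have hxi : Gam n k 0 1 (k - 0) w' = Q * Gam n k l 1 (k - l) (shift l w') := by
    rw [Nat.sub_zero]
    exact Gam_split n k l hl1 hlk w' k hlk (le_refl k)
  have hT : Tmap n k 0 w' = (∑ j ∈ Finset.Icc 1 (k-0), Rmap n k 0 w' j * Gam n k 0 1 j w')
      + xi n k * Gam n k 0 1 (k - 0) w' := rfl
  have hTl : Tmap n k l (shift l w') =
      (∑ j ∈ Finset.Ioc 0 (k-l), Rmap n k l (shift l w') j * Gam n k l 1 j (shift l w'))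
      + xi n k * Gam n k l 1 (k - l) (shift l w') := by
    unfold Tmap; rw [Icc_one_eq_Ioc]
  rw [hT, hsum, hR, hQl, hrest, hxi, hTl]
  ring
lemma rr_neg (n k : ℕ) (l : ℤ) (hl : l < 0) (y : ℕ) : rr n k l y = 0 := by
  unfold rr; rw [if_pos hl]

lemma head_sum_eq (n k l : ℕ) (hl1 : 1 ≤ l) (hlk : l ≤ k) (w : ℕ → ℕ) (x : ℕ) :
    ∑ j ∈ Finset.Ioc 0 (l-1),
        Rmap n k 0 (Function.update w l x) j * Gam n k 0 1 j (Function.update w l x)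
    = (∑ j ∈ Finset.Ioc 0 (l-1),
        Rmap n k 0 (Function.update w l 0) j * Gam n k 0 1 j (Function.update w l 0))
      + (∏ t ∈ Finset.Icc 1 (l-1), ((w t : ℝ) - t + 1)) *
        (rr n k ((l:ℤ)-2) 0 - rr n k ((l:ℤ)-2) x) := by
  rcases eq_or_lt_of_le hl1 with h1 | h1
  · rw [← h1]
    norm_num [rr_neg n k (-1) (by norm_num)]
  · -- l ≥ 2
    have hsplit : Finset.Ioc 0 (l-1) = Finset.Ioc 0 (l-2) ∪ {l-1} := by
      rw [show ({l-1} : Finset ℕ) = Finset.Ioc (l-2) (l-1) by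
          rw [show l-1 = (l-2)+1 by omega, Nat.Ioc_succ_singleton]]
      rw [Finset.Ioc_union_Ioc_eq_Ioc (by omega) (by omega)]
    have hdisj : Disjoint (Finset.Ioc 0 (l-2)) ({l-1} : Finset ℕ) := by
      simp [Finset.disjoint_singleton_right]; omega
    have hGam : ∀ y : ℕ, ∀ j ≤ l-1,
        Gam n k 0 1 j (Function.update w l y) = Gam n k 0 1 j w := by
      intro y j hj
      unfold Gam
      split_ifs with hc
      · refine Finset.prod_congr rfl fun t ht => ?_
        rw [Finset.mem_Icc] at ht
        rw [Function.update_of_ne (by omega) _ _]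
      · rfl
    have hRlow : ∀ y : ℕ, ∀ j ∈ Finset.Ioc 0 (l-2),
        Rmap n k 0 (Function.update w l y) j = Rmap n k 0 w j := by
      intro y j hj
      rw [Finset.mem_Ioc] at hj
      have e1 : Function.update w l y j = w j := Function.update_of_ne (by omega) _ _
      have e2 : Function.update w l y (j+1) = w (j+1) := Function.update_of_ne (by omega) _ _
      simp only [Rmap, e1, e2]
    have hRtop : ∀ y : ℕ, Rmap n k 0 (Function.update w l y) (l-1)
        = rr n k ((l:ℤ)-2) (w (l-1)) - rr n k ((l:ℤ)-2) y := by
      intro y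
      unfold Rmap
      rw [if_pos (show (1:ℕ) ≤ l-1 ∧ l-1 ≤ k - 0 from ⟨by omega, by omega⟩)]
      rw [if_neg (show ¬ (l-1 = k - 0) by omega)]
      rw [Function.update_of_ne (by omega) _ _,
        show l - 1 + 1 = l by omega, Function.update_self]
      rw [show (((0:ℕ)):ℤ) + ((l-1:ℕ):ℤ) - 1 = (l:ℤ) - 2 by push_cast [hl1]; ring]
    have hP : ∀ y : ℕ, Gam n k 0 1 (l-1) (Function.update w l y)
        = ∏ t ∈ Finset.Icc 1 (l-1), ((w t : ℝ) - t + 1) := by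
      intro y
      rw [hGam y (l-1) (le_refl _)]
      unfold Gam
      rw [if_pos (show (1:ℕ) ≤ 1 ∧ 1 ≤ l-1 ∧ l-1 ≤ k - 0 from ⟨le_refl 1, by omega, by omega⟩)]
      exact Finset.prod_congr rfl fun t _ => by push_cast; ring
    have expand : ∀ y : ℕ,
        ∑ j ∈ Finset.Ioc 0 (l-1),
          Rmap n k 0 (Function.update w l y) j * Gam n k 0 1 j (Function.update w l y)
        = (∑ j ∈ Finset.Ioc 0 (l-2), Rmap n k 0 w j * Gam n k 0 1 j w)
          + (rr n k ((l:ℤ)-2) (w (l-1)) - rr n k ((l:ℤ)-2) y) *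
            ∏ t ∈ Finset.Icc 1 (l-1), ((w t : ℝ) - t + 1) := by
      intro y
      rw [hsplit, Finset.sum_union hdisj, Finset.sum_singleton, hRtop, hP]
      congr 1
      refine Finset.sum_congr rfl fun j hj => ?_
      rw [hRlow y j hj, hGam y j (by rw [Finset.mem_Ioc] at hj; omega)]
    rw [expand x, expand 0]
    ring
lemma Cb_eq_choose (a b : ℤ) (p q : ℕ) (ha : a = (p:ℤ)) (hb : b = (q:ℤ)) :
    Cb a b = (p.choose q : ℝ) := by
  subst ha; subst hb; exact Cb_natCast p q

lemma key_l1 (n k : ℕ) (hk : 1 ≤ k) (hkn : k < n) (x : ℕ) (hxl : 1 ≤ x) (hxn : x ≤ n - 1) :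
    ((x:ℝ) - 1 + 1) * rr n k (((1:ℕ):ℤ)-1) x - rr n k (((1:ℕ):ℤ)-2) x = - c n k (1-1) x := by
  rw [show ((1:ℕ):ℤ) - 2 = -1 by norm_num, rr_neg n k (-1) (by norm_num) x,
    show ((1:ℕ):ℤ) - 1 = 0 by norm_num]
  have hrr : rr n k 0 x = 1 / (x : ℝ) - (k : ℝ) / n - Cb ((n : ℤ) - x - 1) k / ((x : ℝ) * Cb n k)
      - (1 / Cb n k) * ∑ j ∈ Finset.Icc 1 x, Cb ((n : ℤ) - j - 1) ((k : ℤ) - 1) / (j : ℝ) := by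
    unfold rr
    rw [if_neg (by norm_num), if_pos rfl]
  have hc : c n k (1-1) x = -1 + (k : ℝ) * x / n + Cb ((n : ℤ) - x - 1) k / Cb n k
      + ((x : ℝ) / Cb n k) * ∑ j ∈ Finset.Icc 1 x, Cb ((n : ℤ) - j - 1) ((k : ℤ) - 1) / (j : ℝ) := by
    show d n k 0 (x - 0) = _
    rw [Nat.sub_zero]
    unfold d
    rw [if_pos rfl]
  rw [hrr, hc]
  have hC1 : Cb (n:ℤ) (k:ℤ) ≠ 0 := by
    rw [Cb_natCast]
    exact Nat.cast_ne_zero.mpr (Nat.choose_pos hkn.le).ne'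
  have hx0 : (x:ℝ) ≠ 0 := Nat.cast_ne_zero.mpr (by omega)
  have hn0 : (n:ℝ) ≠ 0 := Nat.cast_ne_zero.mpr (by omega)
  field_simp
  ring

lemma rr_zero (n k x : ℕ) : rr n k 0 x =
    1 / (x : ℝ) - (k : ℝ) / n - Cb ((n : ℤ) - x - 1) k / ((x : ℝ) * Cb n k)
      - (1 / Cb n k) * ∑ j ∈ Finset.Icc 1 x, Cb ((n : ℤ) - j - 1) ((k : ℤ) - 1) / (j : ℝ) := by
  unfold rr
  rw [if_neg (by norm_num), if_pos rfl]

lemma rr_nat (n k m x : ℕ) (hm : 1 ≤ m) :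
    rr n k (m:ℤ) x = (((x - m - 1).factorial : ℝ) / (x.factorial : ℝ)) *
      (1 - (1/((m:ℝ) * Cb n x)) * ∑ j ∈ Finset.range (m+1),
        ((m:ℝ) - j) * Cb k j * Cb ((n:ℤ)-k) ((x:ℤ)-j)) := by
  unfold rr
  rw [if_neg (by omega), if_neg (by omega)]
  norm_num

lemma key_l2 (n k : ℕ) (hk : 1 ≤ k) (hkn : k < n) (x : ℕ) (hxl : 2 ≤ x) (hxn : x ≤ n - 1) :
    ((x:ℝ) - 2 + 1) * rr n k (((2:ℕ):ℤ)-1) x - rr n k (((2:ℕ):ℤ)-2) x = - c n k (2-1) x := by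
  have hC1 : Cb (n:ℤ) (k:ℤ) ≠ 0 := by
    rw [Cb_natCast]
    exact Nat.cast_ne_zero.mpr (Nat.choose_pos hkn.le).ne'
  have hC2 : Cb (n:ℤ) (x:ℤ) ≠ 0 := by
    rw [Cb_natCast]
    exact Nat.cast_ne_zero.mpr (Nat.choose_pos (by omega)).ne'
  have hx0 : (x:ℝ) ≠ 0 := Nat.cast_ne_zero.mpr (by omega)
  have hn0 : (n:ℝ) ≠ 0 := Nat.cast_ne_zero.mpr (by omega)
  rw [show ((2:ℕ):ℤ) - 1 = ((1:ℕ):ℤ) by norm_num, show ((2:ℕ):ℤ) - 2 = 0 by norm_num,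
    rr_nat n k 1 x le_rfl, rr_zero n k x]
  have h0 : Cb (k:ℤ) 0 = 1 := by
    rw [show (0:ℤ) = ((0:ℕ):ℤ) by norm_num, Cb_natCast]; simp
  have hsum2 : ∑ j ∈ Finset.range (1+1), (((1:ℕ):ℝ) - j) * Cb k j * Cb ((n:ℤ)-k) ((x:ℤ)-j)
      = Cb ((n:ℤ)-k) (x:ℤ) := by
    rw [Finset.sum_range_succ, Finset.sum_range_succ, Finset.sum_range_zero]
    norm_num [h0]
  rw [hsum2]
  have hc : c n k (2-1) x = -((k : ℝ) / n)
      - (1 / Cb n k) * ∑ j ∈ Finset.Icc 1 (x-1), Cb ((n : ℤ) - j - 1) ((k : ℤ) - 1) / (j : ℝ) := by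
    show d n k 1 (x - 1) = _
    unfold d
    rw [if_neg one_ne_zero, if_pos rfl]
  rw [hc]
  have hsplit : ∑ j ∈ Finset.Icc 1 x, Cb ((n : ℤ) - j - 1) ((k : ℤ) - 1) / (j : ℝ)
      = (∑ j ∈ Finset.Icc 1 (x-1), Cb ((n : ℤ) - j - 1) ((k : ℤ) - 1) / (j : ℝ))
        + Cb ((n : ℤ) - x - 1) ((k : ℤ) - 1) / (x : ℝ) := by
    obtain ⟨y, rfl⟩ : ∃ y, x = y + 1 := ⟨x-1, by omega⟩
    rw [Finset.sum_Icc_succ_top (by omega), Nat.add_sub_cancel]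
  rw [hsplit]
  have hbin : Cb ((n:ℤ)-k) (x:ℤ) * Cb (n:ℤ) (k:ℤ)
      = (Cb ((n:ℤ)-x-1) (k:ℤ) + Cb ((n:ℤ)-x-1) ((k:ℤ)-1)) * Cb (n:ℤ) (x:ℤ) := by
    rw [Cb_eq_choose _ _ (n-k) x (by omega) rfl, Cb_natCast,
      Cb_eq_choose _ _ (n-x-1) k (by omega) rfl,
      Cb_eq_choose _ _ (n-x-1) (k-1) (by omega) (by omega), Cb_natCast]
    have pascal : (n-x).choose k = (n-x-1).choose (k-1) + (n-x-1).choose k := by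
      have h := Nat.choose_succ_succ' (n-x-1) (k-1)
      rw [show k-1+1 = k by omega, show n-x-1+1 = n-x by omega] at h
      exact h
    have hcc := choose_mul_choose_symm n x k (by omega) hkn.le
    have pascalR : ((n-x-1).choose k : ℝ) + ((n-x-1).choose (k-1) : ℝ) = ((n-x).choose k : ℝ) := by
      rw [pascal]; push_cast; ring
    rw [pascalR]
    linear_combination -hcc
  have hfac : (x.factorial : ℝ) = (x:ℝ) * ((x:ℝ)-1) * ((x-2).factorial : ℝ) := by
    obtain ⟨y, rfl⟩ : ∃ y, x = y + 2 := ⟨x-2, by omega⟩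
    rw [show y+2-2 = y by omega, Nat.factorial_succ, Nat.factorial_succ]
    push_cast; ring
  have hf2 : ((x-2).factorial : ℝ) ≠ 0 := Nat.cast_ne_zero.mpr (Nat.factorial_ne_zero _)
  have hx1 : (x:ℝ) - 1 ≠ 0 := by
    have : (2:ℝ) ≤ (x:ℝ) := by exact_mod_cast hxl
    linarith
  have hA : ((x:ℝ)-2+1) * (((x-2).factorial:ℝ)/(x.factorial:ℝ)) = 1/(x:ℝ) := by
    rw [hfac]
    field_simp
    ring
  rw [show x - 1 - 1 = x - 2 by omega]
  rw [show ((x:ℝ)-2+1) * ((((x-2).factorial:ℝ))/(x.factorial:ℝ) *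
      (1 - 1/((((1:ℕ)):ℝ) * Cb n x) * Cb ((n:ℤ)-k) (x:ℤ)))
    = (((x:ℝ)-2+1) * ((((x-2).factorial:ℝ))/(x.factorial:ℝ))) *
      (1 - 1/((((1:ℕ)):ℝ) * Cb n x) * Cb ((n:ℤ)-k) (x:ℤ)) by ring, hA]
  field_simp
  linear_combination (-(n:ℝ)) * hbin
lemma key_ge3 (n k : ℕ) (hk : 1 ≤ k) (hkn : k < n) (m x : ℕ) (hm : 2 ≤ m) (hmk : m + 1 ≤ k)
    (hxl : m + 1 ≤ x) (hxn : x ≤ n - 1) :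
    ((x:ℝ) - ((m+1:ℕ):ℝ) + 1) * rr n k (m:ℤ) x - rr n k ((m:ℤ)-1) x = - d n k m (x - m) := by
  have hxn' : x ≤ n := by omega
  have hmx : m ≤ x := by omega
  have hm2R : (2:ℝ) ≤ (m:ℝ) := by exact_mod_cast hm
  have hm0 : (m:ℝ) ≠ 0 := by linarith
  have hm1 : (m:ℝ) - 1 ≠ 0 := by linarith
  have hC2 : Cb (n:ℤ) (x:ℤ) = (n.choose x : ℝ) := Cb_natCast n x
  have hC2ne : Cb (n:ℤ) (x:ℤ) ≠ 0 := by
    rw [hC2]; exact Nat.cast_ne_zero.mpr (Nat.choose_pos hxn').ne'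
  have hF2 : (x.factorial : ℝ) ≠ 0 := Nat.cast_ne_zero.mpr (Nat.factorial_ne_zero _)
  have hF4 : (n.factorial : ℝ) ≠ 0 := Nat.cast_ne_zero.mpr (Nat.factorial_ne_zero _)
  set Sm := ∑ j ∈ Finset.range (m+1), ((m:ℝ) - j) * Cb k j * Cb ((n:ℤ)-k) ((x:ℤ)-j) with hSmdef
  set Sm1 := ∑ j ∈ Finset.range ((m-1)+1), (((m-1:ℕ):ℝ) - j) * Cb k j * Cb ((n:ℤ)-k) ((x:ℤ)-j)
    with hSm1def
  set T := ∑ j ∈ Finset.range (m-1), Cb ((k:ℤ)-1) (j:ℤ) * Cb ((n:ℤ)-k) ((x:ℤ)-j-1) with hTdef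
  have hm1cast : ((m-1:ℕ):ℝ) = (m:ℝ) - 1 := by
    have : ((m-1:ℕ):ℝ) = ((m:ℕ):ℝ) - ((1:ℕ):ℝ) := by
      rw [← Nat.cast_sub (by omega)]
    rw [this]; norm_num
  -- claim A+B : m * Sm1 - (m-1) * Sm = -(k:ℝ) * T
  have claimAB : (m:ℝ) * Sm1 - ((m:ℝ) - 1) * Sm = -(k:ℝ) * T := by
    have hSm' : Sm = ∑ j ∈ Finset.range m, ((m:ℝ) - j) * Cb k j * Cb ((n:ℤ)-k) ((x:ℤ)-j) := by
      rw [hSmdef, Finset.sum_range_succ]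
      simp
    have hr : (m-1)+1 = m := by omega
    have hSm1' : Sm1 = ∑ j ∈ Finset.range m, (((m-1:ℕ):ℝ) - j) * Cb k j * Cb ((n:ℤ)-k) ((x:ℤ)-j) := by
      rw [hSm1def, hr]
    have step1 : (m:ℝ) * Sm1 - ((m:ℝ) - 1) * Sm
        = ∑ j ∈ Finset.range m, (-(j:ℝ)) * Cb k j * Cb ((n:ℤ)-k) ((x:ℤ)-j) := by
      rw [hSm', hSm1', Finset.mul_sum, Finset.mul_sum, ← Finset.sum_sub_distrib]
      refine Finset.sum_congr rfl fun j hj => ?_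
      rw [hm1cast]; ring
    rw [step1, hTdef, Finset.mul_sum]
    rw [show m = (m-1)+1 by omega, Finset.sum_range_succ']
    have h0 : (-(((0:ℕ)):ℝ)) * Cb (k:ℤ) ((0:ℕ):ℤ) * Cb ((n:ℤ)-k) ((x:ℤ)-((0:ℕ):ℤ)) = 0 := by
      norm_num
    rw [h0, add_zero, show (m-1)+1-1 = m-1 by omega]
    refine Finset.sum_congr rfl fun i hi => ?_
    rw [Finset.mem_range] at hi
    have e1 : Cb (k:ℤ) ((i+1:ℕ):ℤ) = (k.choose (i+1) : ℝ) := Cb_natCast k (i+1)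
    have e2 : Cb ((n:ℤ)-k) ((x:ℤ)-((i+1:ℕ):ℤ)) = ((n-k).choose (x-i-1) : ℝ) :=
      Cb_eq_choose _ _ (n-k) (x-i-1) (by omega) (by omega)
    have e3 : Cb ((k:ℤ)-1) ((i:ℕ):ℤ) = ((k-1).choose i : ℝ) :=
      Cb_eq_choose _ _ (k-1) i (by omega) rfl
    have e4 : Cb ((n:ℤ)-k) ((x:ℤ)-(i:ℕ)-1) = ((n-k).choose (x-i-1) : ℝ) :=
      Cb_eq_choose _ _ (n-k) (x-i-1) (by omega) (by omega)
    rw [e1, e2, e3, e4]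
    have hnat : k * ((k-1).choose i) = k.choose (i+1) * (i+1) := by
      have h := Nat.add_one_mul_choose_eq (k-1) i
      rwa [show k-1+1 = k by omega] at h
    have hcast : (k:ℝ) * ((k-1).choose i : ℝ) = (k.choose (i+1) : ℝ) * ((i+1:ℕ):ℝ) := by
      exact_mod_cast congrArg (Nat.cast (R := ℝ)) hnat
    push_cast at hcast ⊢
    linear_combination (((n-k).choose (x-i-1) : ℝ)) * hcast
  -- rewrite the rr's
  rw [show ((m:ℤ)-1) = ((m-1:ℕ):ℤ) by omega, rr_nat n k m x (by omega),
    rr_nat n k (m-1) x (by omega), show x-(m-1)-1 = x-m by omega]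
  -- d side
  have hd : d n k m (x - m) = ((k:ℝ) * ((x-m).factorial : ℝ) * ((n-x).factorial : ℝ) /
      ((m:ℝ) * ((m:ℝ) - 1) * (n.factorial : ℝ))) * T := by
    unfold d
    rw [if_neg (by omega), if_neg (by omega), show n - m - (x-m) = n - x by omega]
    congr 1
    rw [hTdef]
    refine Finset.sum_congr rfl fun j hj => ?_
    congr 1
    congr 1
    omega
  rw [hd]
  -- factorial facts
  have hf3 : ((x-m).factorial : ℝ) = ((x-m:ℕ):ℝ) * ((x-m-1).factorial : ℝ) := by
    obtain ⟨y, hy⟩ : ∃ y, x - m = y + 1 := ⟨x-m-1, by omega⟩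
    rw [hy, show y+1-1 = y by omega, Nat.factorial_succ]
    push_cast; ring
  have hA : ((x:ℝ) - ((m+1:ℕ):ℝ) + 1) = ((x-m:ℕ):ℝ) := by
    rw [Nat.cast_sub hmx]; push_cast; ring
  have hfact : (n.choose x : ℝ) * (x.factorial : ℝ) * ((n-x).factorial : ℝ)
      = (n.factorial : ℝ) := by
    exact_mod_cast congrArg (Nat.cast (R := ℝ))
      (Nat.choose_mul_factorial_mul_factorial hxn')
  have hsub : ∀ X : ℝ, ((x:ℝ) - ((m+1:ℕ):ℝ) + 1) * (((x-m-1).factorial : ℝ) / (x.factorial : ℝ) * X)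
      = ((x-m).factorial : ℝ) / (x.factorial : ℝ) * X := by
    intro X
    rw [hA, hf3]; ring
  rw [hsub]
  have hCne : ((n.choose x : ℕ):ℝ) ≠ 0 := Nat.cast_ne_zero.mpr (Nat.choose_pos hxn').ne'
  have hkey2 : (1 - 1/((m:ℝ) * Cb (n:ℤ) (x:ℤ)) * Sm) - (1 - 1/(((m-1:ℕ):ℝ) * Cb (n:ℤ) (x:ℤ)) * Sm1)
      = -((k:ℝ) * T) / ((m:ℝ) * ((m:ℝ)-1) * (n.choose x : ℝ)) := by
    rw [hm1cast, hC2]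
    rw [show (1 - 1/((m:ℝ)*(n.choose x:ℝ)) * Sm) - (1 - 1/(((m:ℝ)-1)*(n.choose x:ℝ)) * Sm1)
        = ((m:ℝ)*Sm1 - ((m:ℝ)-1)*Sm)/((m:ℝ)*((m:ℝ)-1)*(n.choose x:ℝ)) from by
      field_simp; ring]
    rw [claimAB]; ring
  rw [← mul_sub, hkey2, ← hfact]
  have hF3 : ((n-x).factorial : ℝ) ≠ 0 := Nat.cast_ne_zero.mpr (Nat.factorial_ne_zero _)
  field_simp
lemma key_identity (n k : ℕ) (hk : 1 ≤ k) (hkn : k < n) (l x : ℕ)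
    (hl1 : 1 ≤ l) (hlk : l ≤ k) (hxl : l ≤ x) (hxn : x ≤ n - 1) :
    ((x:ℝ) - l + 1) * rr n k ((l:ℤ)-1) x - rr n k ((l:ℤ)-2) x = - c n k (l-1) x := by
  rcases Nat.lt_or_ge l 3 with h3 | h3
  · rcases Nat.lt_or_ge l 2 with h2 | h2
    · have hl : l = 1 := by omega
      subst hl
      have h := key_l1 n k hk hkn x hxl hxn
      simpa using h
    · have hl : l = 2 := by omega
      subst hl
      have h := key_l2 n k hk hkn x hxl hxn
      simpa using h
  · have h := key_ge3 n k hk hkn (l-1) x (by omega) (by omega) (by omega) hxn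
    rw [show (l-1)+1 = l by omega] at h
    rw [show ((l-1:ℕ):ℤ) = (l:ℤ)-1 by omega] at h
    rw [show ((l:ℤ)-1)-1 = (l:ℤ)-2 by ring] at h
    have hc : c n k (l-1) x = d n k (l-1) (x-(l-1)) := rfl
    rw [hc]
    exact h
lemma Tmap_update_eq (n k l : ℕ) (hl1 : 1 ≤ l) (hlk : l ≤ k) (w : ℕ → ℕ) (x : ℕ) :
    Tmap n k 0 (Function.update w l x) =
      ((∑ j ∈ Finset.Ioc 0 (l-1),
          Rmap n k 0 (Function.update w l 0) j * Gam n k 0 1 j (Function.update w l 0))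
        + (∏ t ∈ Finset.Icc 1 (l-1), ((w t : ℝ) - t + 1)) * rr n k ((l:ℤ)-2) 0)
      + (∏ t ∈ Finset.Icc 1 (l-1), ((w t : ℝ) - t + 1)) *
        (((x:ℝ) - l + 1) * rr n k ((l:ℤ)-1) x - rr n k ((l:ℤ)-2) x
          - ((x:ℝ) - l + 1) * Dmap n k l (shift l w)) := by
  set P := ∏ t ∈ Finset.Icc 1 (l-1), ((w t : ℝ) - t + 1) with hPdef
  have hsplit := Tmap_zero_split n k l hl1 hlk (Function.update w l x)
  have hQ : ∏ t ∈ Finset.Icc 1 l, ((Function.update w l x t : ℝ) - t + 1)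
      = P * ((x:ℝ) - l + 1) := by
    have hsing : Finset.Ioc (l-1) l = {l} := by
      have h := Nat.Ioc_succ_singleton (b := l-1)
      rw [show l-1+1 = l by omega] at h
      exact h
    rw [Icc_one_eq_Ioc, ← Finset.prod_Ioc_consecutive _ (by omega : (0:ℕ) ≤ l-1)
      (by omega : l-1 ≤ l), hsing, Finset.prod_singleton, Function.update_self]
    congr 1
    rw [hPdef, Icc_one_eq_Ioc]
    exact Finset.prod_congr rfl fun t ht => by
      rw [Finset.mem_Ioc] at ht
      rw [Function.update_of_ne (by omega) _ _]
  have hTl : Tmap n k l (shift l (Function.update w l x)) = Tmap n k l (shift l w) := by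
    refine Tmap_congr n k l _ _ fun j hj1 hj2 => ?_
    show Function.update w l x (l + j) = w (l + j)
    exact Function.update_of_ne (by omega) _ _
  have hif : (if l = k then n - 1 else Function.update w l x (l+1)) =
      (if l = k then n - 1 else w (l+1)) := by
    split_ifs
    · rfl
    · exact Function.update_of_ne (by omega) _ _
  rw [hsplit, hQ, Function.update_self, hTl, hif, head_sum_eq n k l hl1 hlk w x]
  have hD : Tmap n k l (shift l w) =
      rr n k ((l:ℤ)-1) (if l = k then n - 1 else w (l+1)) - Dmap n k l (shift l w) := by
    unfold Dmap
    have : (if l = k then n - 1 else shift l w 1) = (if l = k then n - 1 else w (l+1)) := by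
      split_ifs
      · rfl
      · rfl
    rw [this]
    ring
  rw [hD]
  ring

theorem T_affine_in_letter (n k : ℕ) (hk : 1 ≤ k) (hkn : k < n) (w : ℕ → ℕ)
    (hw : memX n k 0 w) (l : ℕ) (hl : l ∈ Finset.Icc 1 k) :
    ∃ A : ℝ, 0 < A ∧ ∃ B : ℝ, ∀ x ∈ Finset.Icc l (n - 1),
      Tmap n k 0 (Function.update w l x) =
        A * Fmap n k l (shift l w) x + B := by
  rw [Finset.mem_Icc] at hl
  obtain ⟨hl1, hlk⟩ := hl
  set P := ∏ t ∈ Finset.Icc 1 (l-1), ((w t : ℝ) - t + 1) with hPdef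
  have hP : 0 < P := by
    refine Finset.prod_pos fun t ht => ?_
    rw [Finset.mem_Icc] at ht
    have := (hw t (by rw [Finset.mem_Icc]; omega)).1
    have : (t:ℝ) ≤ (w t : ℝ) := by exact_mod_cast le_trans (by omega) this
    linarith
  refine ⟨P, hP,
    ((∑ j ∈ Finset.Ioc 0 (l-1),
        Rmap n k 0 (Function.update w l 0) j * Gam n k 0 1 j (Function.update w l 0))
      + P * rr n k ((l:ℤ)-2) 0) + P * (((l:ℝ) - 1) * Dmap n k l (shift l w)), ?_⟩
  intro x hx
  rw [Finset.mem_Icc] at hx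
  rw [Tmap_update_eq n k l hl1 hlk w x]
  have hkey := key_identity n k hk hkn l x hl1 hlk hx.1 hx.2
  unfold Fmap
  have : ((x:ℝ) - l + 1) * rr n k ((l:ℤ)-1) x - rr n k ((l:ℤ)-2) x
      - ((x:ℝ) - l + 1) * Dmap n k l (shift l w)
      = (- c n k (l-1) x - (x:ℝ) * Dmap n k l (shift l w))
        + ((l:ℝ) - 1) * Dmap n k l (shift l w) := by
    rw [← hkey]; ring
  rw [this]
  ring
end Secretary
end

section
/- One has D_k(ε) = δ_{k,n}, and for every l ∈ {0,1,...,k-1} and every w ∈ X^{(k-l)} with first letter x_1, one has D_l(w) = (x_1 - l) · D_{l+1}(σ(w)) + c_l(x_1). -/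
open Finset

namespace Secretary

lemma Cb_nat (a b : ℕ) : Cb a b = (a.choose b : ℝ) := by
  unfold Cb
  split
  · simp
  · next h =>
    push_neg at h
    have : a < b := by exact_mod_cast h (by positivity)
    rw [Nat.choose_eq_zero_of_lt this]
    simp

lemma Cb_neg (a b : ℤ) (h : b < 0) : Cb a b = 0 := by
  unfold Cb; rw [if_neg]; omega

lemma Cb_big (a b : ℤ) (h : a < b) : Cb a b = 0 := by
  unfold Cb; rw [if_neg]; omega

lemma Cb_zero (a : ℤ) (h : 0 ≤ a) : Cb a 0 = 1 := by
  unfold Cb; rw [if_pos ⟨le_refl 0, h⟩]; simp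

lemma base_case (n k : ℕ) (hk : 1 ≤ k) (hkn : k < n) :
    Dmap n k k (fun _ => 0) = delta n k := by
  have hTmap : Tmap n k k (fun _ => 0) = xi n k := by
    unfold Tmap Gam
    rw [Nat.sub_self]
    rw [if_neg (by omega)]
    simp
  unfold Dmap
  rw [hTmap, if_pos rfl]
  rcases eq_or_lt_of_le hk with h1 | h2
  · -- k = 1
    subst h1
    obtain ⟨m, rfl⟩ : ∃ m, n = m + 2 := ⟨n - 2, by omega⟩
    have hc1 : ((1:ℕ):ℤ) - 1 = (0:ℤ) := by norm_num
    unfold rr delta xi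
    rw [hc1, if_neg (lt_irrefl 0), if_pos rfl, if_pos rfl]
    have hx0 : ((m + 2 : ℕ):ℤ) - ((m + 2 - 1 : ℕ):ℤ) - 1 = 0 := by push_cast; omega
    rw [hx0, Cb_big 0 ((1:ℕ):ℤ) (by exact_mod_cast zero_lt_one)]
    have hCn1 : Cb (m+2 : ℕ) ((1:ℕ):ℤ) = ((m:ℝ) + 2) := by
      rw [Cb_nat (m+2) 1]
      simp [Nat.choose_one_right]
    have hsum : ∑ j ∈ Finset.Icc 1 (m + 2 - 1), Cb ((m+2 : ℕ) - (j:ℤ) - 1) 0 / (j:ℝ)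
        = ∑ j ∈ Finset.Icc 1 (m + 2 - 1), 1 / (j:ℝ) := by
      refine Finset.sum_congr rfl fun j hj => ?_
      rw [Finset.mem_Icc] at hj
      rw [Cb_zero _ (by push_cast; omega)]
    rw [hCn1, hsum]
    have hm1 : (m + 2 - 1 : ℕ) = m + 1 := by omega
    have hm2 : (m + 1 - 1 : ℕ) = m := by omega
    rw [hm1, hm2]
    have hfac : ((m+2).factorial : ℝ) = ((m:ℝ)+2) * ((m:ℝ)+1) * (m.factorial : ℝ) := by
      rw [show m+2 = (m+1)+1 from rfl, Nat.factorial_succ, Nat.factorial_succ]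
      push_cast; ring
    have hfp : (0:ℝ) < (m.factorial : ℝ) := by positivity
    rw [hfac]
    push_cast
    field_simp
    ring
  · -- k ≥ 2
    unfold rr delta xi
    rw [if_neg (by omega : ¬((k:ℤ) - 1 < 0)), if_neg (by omega : ¬((k:ℤ) - 1 = 0)),
      if_neg (by omega : ¬ k = 1)]
    have htn : ((k:ℤ) - 1).toNat = k - 1 := by omega
    rw [htn]
    have hsum : ∑ j ∈ Finset.range (k - 1 + 1),
        ((((k:ℤ) - 1 : ℤ) : ℝ) - j) * Cb k j * Cb ((n:ℤ) - k) (((n-1 : ℕ) : ℤ) - j) = 0 := by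
      refine Finset.sum_eq_zero fun j hj => ?_
      rw [Finset.mem_range] at hj
      rcases eq_or_lt_of_le (Nat.lt_succ_iff.mp hj) with hjk | hjk
      · subst hjk
        have : ((((k:ℤ) - 1 : ℤ) : ℝ) - (k - 1 : ℕ)) = 0 := by push_cast [Nat.cast_sub hk]; ring
        rw [this, zero_mul, zero_mul]
      · rw [Cb_big ((n:ℤ) - k) (((n-1 : ℕ) : ℤ) - j) (by push_cast; omega), mul_zero]
    rw [hsum, mul_zero, sub_zero, mul_one]
    have he1 : (n - 1 - (k - 1) - 1 : ℕ) = n - k - 1 := by omega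
    rw [he1]
    have hf1 : ((n:ℕ).factorial : ℝ) = (n:ℝ) * ((n-1:ℕ).factorial : ℝ) := by
      rw [show n = (n-1)+1 by omega, Nat.factorial_succ]
      push_cast [show (n-1)+1 = n by omega]; ring
    have hf2 : ((n-k:ℕ).factorial : ℝ) = ((n:ℝ) - k) * ((n-k-1:ℕ).factorial : ℝ) := by
      rw [show n-k = (n-k-1)+1 by omega, Nat.factorial_succ]
      push_cast [show (n-k-1)+1 = n-k by omega, Nat.cast_sub hkn.le]; ring
    rw [hf1, hf2]
    have hp1 : (0:ℝ) < ((n-1:ℕ).factorial : ℝ) := by positivity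
    have hp2 : (0:ℝ) < ((n-k-1:ℕ).factorial : ℝ) := by positivity
    have hpn : (0:ℝ) < (n:ℝ) := by exact_mod_cast (show 0 < n by omega)
    field_simp

lemma prod_Icc_split (f : ℕ → ℝ) (j : ℕ) :
    ∏ t ∈ Finset.Icc 1 (j+1), f t = f 1 * ∏ i ∈ Finset.range j, f (i+2) := by
  rw [← Finset.Ico_add_one_right_eq_Icc, Finset.prod_Ico_eq_prod_range]
  have e : j + 1 + 1 - 1 = j + 1 := by omega
  rw [e, Finset.prod_range_succ' (fun i => f (1+i)) j, mul_comm]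
  congr 1
  exact Finset.prod_congr rfl fun i _ => by rw [show 1 + (i+1) = i+2 by omega]

lemma sum_Icc_split (f : ℕ → ℝ) (j : ℕ) :
    ∑ t ∈ Finset.Icc 1 (j+1), f t = f 1 + ∑ i ∈ Finset.range j, f (i+2) := by
  rw [← Finset.Ico_add_one_right_eq_Icc, Finset.sum_Ico_eq_sum_range]
  have e : j + 1 + 1 - 1 = j + 1 := by omega
  rw [e, Finset.sum_range_succ' (fun i => f (1+i)) j, add_comm]
  congr 1
  exact Finset.sum_congr rfl fun i _ => by rw [show 1 + (i+1) = i+2 by omega]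

lemma sum_Icc_one (f : ℕ → ℝ) (m : ℕ) :
    ∑ j ∈ Finset.Icc 1 m, f j = ∑ i ∈ Finset.range m, f (1 + i) := by
  rw [← Finset.Ico_add_one_right_eq_Icc, Finset.sum_Ico_eq_sum_range]
  simp

lemma Gam_one (n k l : ℕ) (hlk : l < k) (w : ℕ → ℕ) :
    Gam n k l 1 1 w = (w 1 : ℝ) - l := by
  unfold Gam
  rw [if_pos ⟨le_refl 1, le_refl 1, by omega⟩]
  simp

lemma prod_Icc_one (f : ℕ → ℝ) (m : ℕ) :
    ∏ j ∈ Finset.Icc 1 m, f j = ∏ i ∈ Finset.range m, f (1 + i) := by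
  rw [← Finset.Ico_add_one_right_eq_Icc, Finset.prod_Ico_eq_prod_range]
  simp

lemma Gam_shift (n k l : ℕ) (hlk : l < k) (w : ℕ → ℕ) (j : ℕ) (hj : j ≤ k - l - 1) :
    Gam n k l 1 (j + 1) w = ((w 1 : ℝ) - l) * Gam n k (l + 1) 1 j (shift 1 w) := by
  rcases Nat.eq_zero_or_pos j with rfl | hj1
  · rw [Gam_one n k l hlk w]
    unfold Gam
    rw [if_neg (by omega)]
    ring
  · unfold Gam
    rw [if_pos ⟨le_refl 1, by omega, by omega⟩, if_pos ⟨le_refl 1, by omega, by omega⟩]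
    rw [prod_Icc_split (fun t => ((w t : ℝ) - l - t + 1)) j,
      prod_Icc_one (fun t => ((shift 1 w t : ℝ) - ((l+1:ℕ):ℝ) - t + 1)) j]
    have h1 : ((w 1 : ℝ) - l - (1:ℕ) + 1) = (w 1 : ℝ) - l := by push_cast; ring
    rw [h1]
    congr 1
    refine Finset.prod_congr rfl fun i _ => ?_
    unfold shift
    rw [show 1 + (1 + i) = i + 2 from by omega]
    push_cast
    ring

lemma Rmap_shift (n k l : ℕ) (hlk : l < k) (w : ℕ → ℕ) (j : ℕ) (hj1 : 1 ≤ j)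
    (hj : j ≤ k - l - 1) :
    Rmap n k l w (j + 1) = Rmap n k (l + 1) (shift 1 w) j := by
  unfold Rmap shift
  rw [if_pos (show 1 ≤ j + 1 ∧ j + 1 ≤ k - l from ⟨by omega, by omega⟩),
    if_pos (show 1 ≤ j ∧ j ≤ k - (l + 1) from ⟨hj1, by omega⟩)]
  have hc : ((l:ℤ) + (j + 1 : ℕ) - 1) = (((l+1:ℕ)):ℤ) + j - 1 := by push_cast; ring
  have ha : w (j + 1) = w (1 + j) := by rw [Nat.add_comm]
  have hb : (if j + 1 = k - l then n - 1 else w (j + 1 + 1))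
      = (if j = k - (l + 1) then n - 1 else w (1 + (j + 1))) := by
    rcases eq_or_ne j (k - (l+1)) with h | h
    · rw [if_pos h, if_pos (by omega)]
    · rw [if_neg h, if_neg (by omega), Nat.add_comm 1 (j+1)]
  rw [hc, ha, hb]

lemma Tmap_shift (n k l : ℕ) (hlk : l < k) (w : ℕ → ℕ) :
    Tmap n k l w = ((w 1 : ℝ) - l) * (Rmap n k l w 1 + Tmap n k (l + 1) (shift 1 w)) := by
  set m := k - l - 1 with hmdef
  have hm : k - l = m + 1 := by omega
  have hm2 : k - (l + 1) = m := by omega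
  unfold Tmap
  rw [hm, hm2]
  rw [sum_Icc_split (fun j => Rmap n k l w j * Gam n k l 1 j w) m,
    sum_Icc_one (fun j => Rmap n k (l+1) (shift 1 w) j * Gam n k (l+1) 1 j (shift 1 w)) m]
  beta_reduce
  rw [Gam_shift n k l hlk w m (le_refl m), Gam_one n k l hlk w]
  have hterm : ∀ i ∈ Finset.range m,
      Rmap n k l w (i+2) * Gam n k l 1 (i+2) w
        = ((w 1 : ℝ) - l) * (Rmap n k (l+1) (shift 1 w) (1+i) * Gam n k (l+1) 1 (1+i) (shift 1 w)) := by
    intro i hi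
    rw [Finset.mem_range] at hi
    rw [show i + 2 = (i+1) + 1 from rfl,
      Rmap_shift n k l hlk w (i+1) (by omega) (by omega),
      Gam_shift n k l hlk w (i+1) (by omega), show 1 + i = i + 1 from by omega]
    ring
  rw [Finset.sum_congr rfl hterm, ← Finset.mul_sum]
  ring

lemma Cb_choose_pos (a b : ℕ) (h : b ≤ a) : (0:ℝ) < Cb a b := by
  rw [Cb_nat]
  exact_mod_cast Nat.choose_pos h

lemma scalar0 (n k x : ℕ) (hk : 1 ≤ k) (hkn : k < n) (hx1 : 1 ≤ x) (hx2 : x ≤ n - 1) :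
    rr n k ((0:ℕ) - 1 : ℤ) x - ((x:ℝ) - (0:ℕ)) * rr n k ((0:ℕ):ℤ) x = c n k 0 x := by
  unfold rr c d
  rw [if_pos (by omega : ((0:ℕ):ℤ) - 1 < 0), if_neg (by omega : ¬ ((0:ℕ):ℤ) < 0),
    if_pos (by omega : ((0:ℕ):ℤ) = 0), if_pos rfl, Nat.sub_zero]
  have hC : (0:ℝ) < Cb n k := Cb_choose_pos n k hkn.le
  have hxr : (0:ℝ) < (x:ℝ) := by exact_mod_cast hx1
  have hnr : (0:ℝ) < (n:ℝ) := by exact_mod_cast (by omega : 0 < n)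
  push_cast
  field_simp
  ring

lemma choose_swap (n k x : ℕ) (hk : k ≤ n) (hx : x ≤ n) :
    (n-k).choose x * n.choose k = (n-x).choose k * n.choose x := by
  rcases le_or_gt (k + x) n with h | h
  · have h1 := Nat.choose_mul (n := n) (show k ≤ k + x by omega)
    have h2 := Nat.choose_mul (n := n) (show x ≤ k + x by omega)
    have h3 : (k + x).choose k = (k + x).choose x := Nat.choose_symm_add
    rw [show k + x - k = x from by omega] at h1
    rw [show k + x - x = k from by omega] at h2
    calc (n-k).choose x * n.choose k = n.choose k * (n-k).choose x := Nat.mul_comm _ _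
      _ = n.choose (k+x) * (k+x).choose k := h1.symm
      _ = n.choose (k+x) * (k+x).choose x := by rw [h3]
      _ = n.choose x * (n-x).choose k := h2
      _ = (n-x).choose k * n.choose x := Nat.mul_comm _ _
  · rw [Nat.choose_eq_zero_of_lt (show n - k < x from by omega),
      Nat.choose_eq_zero_of_lt (show n - x < k from by omega)]
    simp

lemma scalar1 (n k x : ℕ) (hk : 2 ≤ k) (hkn : k < n) (hx1 : 2 ≤ x) (hx2 : x ≤ n - 1) :
    rr n k (((1:ℕ):ℤ) - 1) x - ((x:ℝ) - ((1:ℕ):ℝ)) * rr n k ((1:ℕ):ℤ) x = c n k 1 x := by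
  obtain ⟨y, rfl⟩ : ∃ y, x = y + 2 := ⟨x - 2, by omega⟩
  unfold rr c d
  rw [if_pos (by omega : (((1:ℕ):ℤ) - 1) = 0)]
  rw [if_neg (by omega : ¬ (((1:ℕ):ℤ) - 1 < 0)), if_neg (by omega : ¬ (((1:ℕ):ℤ) < 0)),
    if_neg (by omega : ¬ (((1:ℕ):ℤ) = 0)), if_neg (by omega : ¬ (1 = 0)), if_pos rfl]
  have htn : ((1:ℕ):ℤ).toNat = 1 := rfl
  rw [htn]
  rw [Finset.sum_range_succ, Finset.sum_range_succ, Finset.sum_range_zero]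
  have hz : ((((1:ℕ):ℤ):ℝ) - ((1:ℕ):ℝ)) = 0 := by push_cast; ring
  rw [hz]
  rw [show y + 2 = (y + 1) + 1 from rfl, Finset.sum_Icc_succ_top (by omega : 1 ≤ y + 1 + 1)]
  rw [show y + 1 + 1 - 1 = y + 1 from rfl]
  have e1 : (n:ℤ) - ((y+1+1 : ℕ):ℤ) - 1 = ((n - (y+2) - 1 : ℕ):ℤ) := by omega
  have e3 : ((k:ℤ) - 1) = ((k - 1 : ℕ):ℤ) := by omega
  have e4 : ((n:ℤ) - (k:ℤ)) = ((n - k : ℕ):ℤ) := by omega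
  have e5 : ((y+1+1 : ℕ):ℤ) - ((0:ℕ):ℤ) = ((y+2 : ℕ):ℤ) := by omega
  rw [e1, e3, e4, e5, Cb_nat, Cb_nat, Cb_nat (n-k) (y+2)]
  rw [Cb_nat k 0, Nat.choose_zero_right]
  have hkey : ((n-k).choose (y+2) : ℝ) * (n.choose k : ℝ)
      = (((n-(y+2)-1).choose k : ℝ) + ((n-(y+2)-1).choose (k-1) : ℝ)) * (n.choose (y+2) : ℝ) := by
    have hp : (n-(y+2)).choose k = (n-(y+2)-1).choose (k-1) + (n-(y+2)-1).choose k := by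
      obtain ⟨m, hm⟩ : ∃ m, n - (y+2) = m + 1 := ⟨n - (y+2) - 1, by omega⟩
      obtain ⟨km, hkm⟩ : ∃ km, k = km + 1 := ⟨k - 1, by omega⟩
      rw [hm, hkm, Nat.choose_succ_succ, show m + 1 - 1 = m from rfl,
        show km + 1 - 1 = km from rfl, Nat.add_comm]
    have hs := choose_swap n k (y+2) hkn.le (by omega)
    rw [hp, Nat.add_comm ((n-(y+2)-1).choose (k-1)) ((n-(y+2)-1).choose k)] at hs
    exact_mod_cast hs
  have hCk : (0:ℝ) < (n.choose k : ℝ) := by exact_mod_cast Nat.choose_pos hkn.le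
  have hCx : (0:ℝ) < (n.choose (y+2) : ℝ) := by exact_mod_cast Nat.choose_pos (by omega : y+2 ≤ n)
  have hQ : ((n-k).choose (y+2) : ℝ)
      = (((n-(y+2)-1).choose k : ℝ) + ((n-(y+2)-1).choose (k-1) : ℝ)) * (n.choose (y+2) : ℝ)
        / (n.choose k : ℝ) := by
    rw [eq_div_iff (ne_of_gt hCk)]
    exact hkey
  rw [hQ]
  rw [show y + 1 - 1 = y from rfl, Cb_nat n (y+1+1), Cb_nat (n - (y+2) - 1) (k-1)]
  have hCx2 : (0:ℝ) < (n.choose (y+1+1) : ℝ) := by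
    exact_mod_cast Nat.choose_pos (by omega : y+1+1 ≤ n)
  have hfac : ((y+1+1).factorial : ℝ) = ((y:ℝ)+2) * ((y:ℝ)+1) * (y.factorial : ℝ) := by
    rw [Nat.factorial_succ, Nat.factorial_succ]; push_cast; ring
  rw [hfac]
  have hfp : (0:ℝ) < (y.factorial : ℝ) := by positivity
  have hnr : (0:ℝ) < (n:ℝ) := by exact_mod_cast (by omega : 0 < n)
  push_cast
  field_simp
  ring

lemma sum_jc (n k x m : ℕ) (hk : 1 ≤ k) (hmx : m ≤ x) :
    ∑ j ∈ Finset.range (m+1), (j:ℝ) * ((k.choose j : ℝ) * ((n-k).choose (x-j) : ℝ))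
      = (k:ℝ) * ∑ i ∈ Finset.range m, ((k-1).choose i : ℝ) * ((n-k).choose (x-i-1) : ℝ) := by
  rw [Finset.sum_range_succ' (fun j => (j:ℝ) * ((k.choose j : ℝ) * ((n-k).choose (x-j) : ℝ))) m]
  rw [Finset.mul_sum]
  norm_num
  refine Finset.sum_congr rfl fun i hi => ?_
  have hh := Nat.add_one_mul_choose_eq (k-1) i
  rw [show k - 1 + 1 = k from by omega] at hh
  have hcast : (k:ℝ) * ((k-1).choose i : ℝ) = (k.choose (i+1) : ℝ) * ((i:ℝ)+1) := by
    exact_mod_cast congrArg (fun t : ℕ => (t:ℝ)) hh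
  have hx' : x - (i+1) = x - i - 1 := by omega
  rw [hx']
  push_cast
  nlinarith [hcast]

lemma scalar2 (n k l x : ℕ) (hl : 2 ≤ l) (hlk : l < k) (hkn : k < n)
    (hx1 : l + 1 ≤ x) (hx2 : x ≤ n - 1) :
    rr n k ((l:ℤ) - 1) x - ((x:ℝ) - (l:ℝ)) * rr n k (l:ℤ) x = c n k l x := by
  unfold rr c d
  rw [if_neg (by omega : ¬ ((l:ℤ) - 1 < 0)), if_neg (by omega : ¬ ((l:ℤ) - 1 = 0)),
    if_neg (by omega : ¬ ((l:ℤ) < 0)), if_neg (by omega : ¬ ((l:ℤ) = 0)),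
    if_neg (by omega : ¬ (l = 0)), if_neg (by omega : ¬ (l = 1))]
  have ht1 : ((l:ℤ) - 1).toNat = l - 1 := by omega
  have ht2 : ((l:ℤ)).toNat = l := by omega
  rw [ht1, ht2, show l - 1 + 1 = l from by omega]
  -- abbreviations
  set A : ℝ := ∑ j ∈ Finset.range l, ((k.choose j : ℝ) * ((n-k).choose (x-j) : ℝ)) with hA
  set E : ℝ := ∑ i ∈ Finset.range (l-1), ((k-1).choose i : ℝ) * ((n-k).choose (x-i-1) : ℝ) with hE
  -- term conversion
  have hterm : ∀ j, j ≤ l → Cb (k:ℤ) (j:ℤ) * Cb ((n:ℤ) - k) ((x:ℤ) - j)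
      = ((k.choose j : ℝ) * ((n-k).choose (x-j) : ℝ)) := by
    intro j hj
    rw [show ((n:ℤ) - (k:ℤ)) = ((n-k:ℕ):ℤ) from by omega,
      show ((x:ℤ) - (j:ℤ)) = ((x-j:ℕ):ℤ) from by omega, Cb_nat, Cb_nat]
  -- sum 1
  have hc1 : ∑ j ∈ Finset.range l, (((((l:ℤ) - 1):ℤ):ℝ) - (j:ℝ)) * Cb (k:ℤ) (j:ℤ)
        * Cb ((n:ℤ) - k) ((x:ℤ) - j) = ((l:ℝ) - 1) * A - (k:ℝ) * E := by
    have h1 : ∀ j ∈ Finset.range l, (((((l:ℤ) - 1):ℤ):ℝ) - (j:ℝ)) * Cb (k:ℤ) (j:ℤ)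
        * Cb ((n:ℤ) - k) ((x:ℤ) - j)
        = ((l:ℝ) - 1) * ((k.choose j : ℝ) * ((n-k).choose (x-j) : ℝ))
          - (j:ℝ) * ((k.choose j : ℝ) * ((n-k).choose (x-j) : ℝ)) := by
      intro j hj
      rw [Finset.mem_range] at hj
      rw [mul_assoc, hterm j (by omega)]
      push_cast
      ring
    rw [Finset.sum_congr rfl h1, Finset.sum_sub_distrib, ← Finset.mul_sum, ← hA]
    congr 1
    have := sum_jc n k x (l-1) (by omega) (by omega)
    rw [show l - 1 + 1 = l from by omega] at this
    rw [this, ← hE]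
  -- sum 2
  have hc2 : ∑ j ∈ Finset.range (l+1), ((((l:ℤ):ℤ):ℝ) - (j:ℝ)) * Cb (k:ℤ) (j:ℤ)
        * Cb ((n:ℤ) - k) ((x:ℤ) - j) = (l:ℝ) * A - (k:ℝ) * E := by
    rw [Finset.sum_range_succ]
    have hz : ((((l:ℤ):ℤ):ℝ) - (l:ℝ)) = 0 := by push_cast; ring
    rw [hz, zero_mul, zero_mul, add_zero]
    have h1 : ∀ j ∈ Finset.range l, ((((l:ℤ):ℤ):ℝ) - (j:ℝ)) * Cb (k:ℤ) (j:ℤ)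
        * Cb ((n:ℤ) - k) ((x:ℤ) - j)
        = (l:ℝ) * ((k.choose j : ℝ) * ((n-k).choose (x-j) : ℝ))
          - (j:ℝ) * ((k.choose j : ℝ) * ((n-k).choose (x-j) : ℝ)) := by
      intro j hj
      rw [Finset.mem_range] at hj
      rw [mul_assoc, hterm j (by omega)]
      push_cast
      ring
    rw [Finset.sum_congr rfl h1, Finset.sum_sub_distrib, ← Finset.mul_sum, ← hA]
    congr 1
    have := sum_jc n k x (l-1) (by omega) (by omega)
    rw [show l - 1 + 1 = l from by omega] at this
    rw [this, ← hE]
  -- sum 3 (d-side)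
  have hc3 : ∑ j ∈ Finset.range (l-1), Cb ((k:ℤ) - 1) (j:ℤ)
        * Cb ((n:ℤ) - k) (((x - l : ℕ):ℤ) + l - j - 1) = E := by
    refine Finset.sum_congr rfl fun j hj => ?_
    rw [Finset.mem_range] at hj
    rw [show ((k:ℤ) - 1) = ((k-1:ℕ):ℤ) from by omega,
      show ((n:ℤ) - (k:ℤ)) = ((n-k:ℕ):ℤ) from by omega,
      show (((x - l : ℕ):ℤ) + l - j - 1) = ((x - j - 1 : ℕ):ℤ) from by omega, Cb_nat, Cb_nat]
  rw [hc1, hc2, hc3, Cb_nat n x]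
  -- arithmetic finish
  rw [show x - (l-1) - 1 = x - l from by omega, show n - l - (x - l) = n - x from by omega]
  have hfl : ((x-l:ℕ).factorial : ℝ) = ((x:ℝ) - l) * ((x-l-1:ℕ).factorial : ℝ) := by
    rw [show x - l = (x - l - 1) + 1 from by omega, Nat.factorial_succ,
      show (x - l - 1) + 1 - 1 = x - l - 1 from by omega]
    push_cast [show x - l - 1 = x - (l+1) from by omega, Nat.cast_sub hx1]
    ring
  have hfn : ((n:ℕ).factorial : ℝ)
      = (n.choose x : ℝ) * (x.factorial : ℝ) * ((n-x).factorial : ℝ) := by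
    exact_mod_cast congrArg (fun t : ℕ => (t:ℝ))
      (Nat.choose_mul_factorial_mul_factorial (show x ≤ n from by omega)).symm
  rw [hfl, hfn]
  have p1 : (0:ℝ) < (x.factorial : ℝ) := by positivity
  have p2 : (0:ℝ) < ((x-l-1:ℕ).factorial : ℝ) := by positivity
  have p3 : (0:ℝ) < ((n-x:ℕ).factorial : ℝ) := by positivity
  have p4 : (0:ℝ) < (n.choose x : ℝ) := by
    exact_mod_cast Nat.choose_pos (show x ≤ n from by omega)
  have p5 : (0:ℝ) < (l:ℝ) := by exact_mod_cast (by omega : 0 < l)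
  have p6 : (0:ℝ) < (l:ℝ) - 1 := by
    have : (1:ℝ) < (l:ℝ) := by exact_mod_cast (by omega : 1 < l)
    linarith
  push_cast
  field_simp
  ring

lemma scalar (n k l x : ℕ) (hk : 1 ≤ k) (hkn : k < n) (hlk : l < k)
    (hx1 : l + 1 ≤ x) (hx2 : x ≤ n - 1) :
    rr n k ((l:ℤ) - 1) x - ((x:ℝ) - (l:ℝ)) * rr n k (l:ℤ) x = c n k l x := by
  match l, hlk with
  | 0, _ => exact scalar0 n k x hk hkn (by omega) hx2
  | 1, _ => exact scalar1 n k x (by omega) hkn (by omega) hx2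
  | (m+2), h => exact scalar2 n k (m+2) x (by omega) h hkn hx1 hx2

theorem Dmap_rec (n k : ℕ) (hk : 1 ≤ k) (hkn : k < n) :
    Dmap n k k (fun _ => 0) = delta n k ∧
    ∀ l : ℕ, l < k → ∀ w : ℕ → ℕ, memX n k l w →
      Dmap n k l w = ((w 1 : ℝ) - l) * Dmap n k (l + 1) (shift 1 w) + c n k l (w 1) := by
  constructor
  · exact base_case n k hk hkn
  · intro l hlk w hw
    have hb := hw 1 (Finset.mem_Icc.mpr ⟨le_refl 1, by omega⟩)
    have hT := Tmap_shift n k l hlk w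
    have hR : Rmap n k l w 1 = rr n k (l:ℤ) (w 1)
        - rr n k (l:ℤ) (if l + 1 = k then n - 1 else shift 1 w 1) := by
      unfold Rmap shift
      rw [if_pos (show 1 ≤ 1 ∧ 1 ≤ k - l from ⟨le_refl 1, by omega⟩)]
      rw [show (l:ℤ) + ((1:ℕ):ℤ) - 1 = (l:ℤ) from by push_cast; ring]
      have hif : (if (1:ℕ) = k - l then n - 1 else w (1+1))
          = (if l + 1 = k then n - 1 else w (1+1)) := by
        rcases eq_or_ne (l+1) k with h | h
        · rw [if_pos (by omega), if_pos h]
        · rw [if_neg (by omega), if_neg h]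
      rw [hif]
    have hs := scalar n k l (w 1) hk hkn hlk hb.1 hb.2
    unfold Dmap
    rw [if_neg (show ¬ l = k from by omega), hT, hR,
      show ((l+1:ℕ):ℤ) - 1 = (l:ℤ) from by push_cast; ring]
    linear_combination hs
end Secretary
end
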